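/- Let n ≥ 1, ε > 0, and Δ > 0. Let X_1, …, X_n be i.i.d. random variables taking values in [0,1] with mean μ, let Y_1, …, Y_n be i.i.d. random variables taking values in [0,1] with mean μ + Δ, and let Q, Q' be i.i.d. random variables with the exponential distribution of rate ε; suppose all of these random variables are mutually independent. Set G = ∑_{i=1}^n X_i and G' = ∑_{i=1}^n Y_i. Then P[−G' + Q' > −G + Q] ≤ exp(−nΔ²/4) + exp(−ε·nΔ/2). -/

import Mathlib

open MeasureTheory ProbabilityTheory
open scoped ENNReal

/-- Hoeffding's lemma, Bernoulli form: for `m ∈ [0,1]`,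
`1 - m + m * exp t ≤ exp (t*m + t²/8)`. -/
lemma rnm_bern_bound (m t : ℝ) (h0 : 0 ≤ m) (h1 : m ≤ 1) :
    1 - m + m * Real.exp t ≤ Real.exp (t * m + t ^ 2 / 8) := by
  have hg : ∀ s : ℝ, 0 < 1 - m + m * Real.exp s := by
    intro s
    rcases eq_or_lt_of_le h1 with h | h
    · rw [h]; simpa using Real.exp_pos s
    · nlinarith [Real.exp_pos s]
  -- h is the derivative of ψ below
  set h : ℝ → ℝ := fun s => s / 4 + m - m * Real.exp s / (1 - m + m * Real.exp s) with hhdef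
  have hNderiv : ∀ s : ℝ, HasDerivAt (fun s => m * Real.exp s / (1 - m + m * Real.exp s))
      (m * Real.exp s / (1 - m + m * Real.exp s)
        - (m * Real.exp s / (1 - m + m * Real.exp s)) ^ 2) s := by
    intro s
    have hnum : HasDerivAt (fun s => m * Real.exp s) (m * Real.exp s) s :=
      (Real.hasDerivAt_exp s).const_mul m
    have hden : HasDerivAt (fun s => 1 - m + m * Real.exp s) (m * Real.exp s) s :=
      hnum.const_add (1 - m)
    have := hnum.div hden (hg s).ne'
    refine this.congr_deriv ?_
    have hgs := (hg s).ne'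
    field_simp
  have hhderiv : ∀ s : ℝ, HasDerivAt h
      (1 / 4 - (m * Real.exp s / (1 - m + m * Real.exp s)
        - (m * Real.exp s / (1 - m + m * Real.exp s)) ^ 2)) s := by
    intro s
    have h1' : HasDerivAt (fun s : ℝ => s / 4 + m) (1 / 4) s := by
      simpa using ((hasDerivAt_id s).div_const 4).add_const m
    exact h1'.sub (hNderiv s)
  have hhmono : Monotone h := by
    apply monotone_of_deriv_nonneg (fun s => (hhderiv s).differentiableAt)
    intro s
    rw [(hhderiv s).deriv]
    have hp0 : 0 ≤ m * Real.exp s / (1 - m + m * Real.exp s) :=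
      div_nonneg (by positivity) (hg s).le
    nlinarith [sq_nonneg (m * Real.exp s / (1 - m + m * Real.exp s) - 1 / 2)]
  have hh0 : h 0 = 0 := by
    simp only [hhdef, Real.exp_zero, mul_one]
    have : 1 - m + m = 1 := by ring
    rw [this]
    norm_num
  set ψ : ℝ → ℝ := fun s => s ^ 2 / 8 + s * m - Real.log (1 - m + m * Real.exp s) with hψdef
  have hψderiv : ∀ s : ℝ, HasDerivAt ψ (h s) s := by
    intro s
    have h1' : HasDerivAt (fun s : ℝ => s ^ 2 / 8 + s * m) (s / 4 + m) s := by
      have ha : HasDerivAt (fun s : ℝ => s ^ 2 / 8) (s / 4) s := by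
        have := (hasDerivAt_pow 2 s).div_const 8
        refine this.congr_deriv ?_
        norm_num
        ring
      have hb : HasDerivAt (fun s : ℝ => s * m) m s := by
        simpa using (hasDerivAt_id s).mul_const m
      exact ha.add hb
    have hden : HasDerivAt (fun s => 1 - m + m * Real.exp s) (m * Real.exp s) s :=
      ((Real.hasDerivAt_exp s).const_mul m).const_add (1 - m)
    have hlog : HasDerivAt (fun s => Real.log (1 - m + m * Real.exp s))
        (m * Real.exp s / (1 - m + m * Real.exp s)) s := hden.log (hg s).ne'
    exact h1'.sub hlog
  have hψ0 : ψ 0 = 0 := by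
    simp only [hψdef, Real.exp_zero, mul_one]
    have : 1 - m + m = 1 := by ring
    rw [this]
    simp
  have hψdiff : Differentiable ℝ ψ := fun s => (hψderiv s).differentiableAt
  have hψnonneg : ∀ s : ℝ, 0 ≤ ψ s := by
    intro s
    rcases le_total 0 s with hs | hs
    · have hmono : MonotoneOn ψ (Set.Ici 0) := by
        apply monotoneOn_of_deriv_nonneg (convex_Ici 0) hψdiff.continuous.continuousOn
          hψdiff.differentiableOn
        intro x hx
        rw [interior_Ici] at hx
        rw [(hψderiv x).deriv]
        have : h 0 ≤ h x := hhmono (le_of_lt hx)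
        linarith [hh0 ▸ this]
      have := hmono (Set.self_mem_Ici) (Set.mem_Ici.2 hs) hs
      linarith [hψ0 ▸ this]
    · have hanti : AntitoneOn ψ (Set.Iic 0) := by
        apply antitoneOn_of_deriv_nonpos (convex_Iic 0) hψdiff.continuous.continuousOn
          hψdiff.differentiableOn
        intro x hx
        rw [interior_Iic] at hx
        rw [(hψderiv x).deriv]
        have : h x ≤ h 0 := hhmono (le_of_lt hx)
        linarith [hh0 ▸ this]
      have := hanti (Set.mem_Iic.2 hs) (Set.self_mem_Iic) hs
      linarith [hψ0 ▸ this]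
  have hlog : Real.log (1 - m + m * Real.exp t) ≤ t * m + t ^ 2 / 8 := by
    have := hψnonneg t
    simp only [hψdef] at this
    linarith
  calc 1 - m + m * Real.exp t = Real.exp (Real.log (1 - m + m * Real.exp t)) :=
        (Real.exp_log (hg t)).symm
    _ ≤ Real.exp (t * m + t ^ 2 / 8) := Real.exp_le_exp.2 hlog

/-- Hoeffding-type mgf bound for a `[0,1]`-valued random variable. -/
lemma rnm_mgf_le {Ω : Type*} [MeasurableSpace Ω] {μ : Measure Ω} [IsProbabilityMeasure μ]
    {Z : Ω → ℝ} (hZ : Measurable Z) (hr : ∀ ω, Z ω ∈ Set.Icc (0 : ℝ) 1) {m : ℝ}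
    (hm : ∫ ω, Z ω ∂μ = m) (t : ℝ) :
    mgf Z μ t ≤ Real.exp (t * m + t ^ 2 / 8) := by
  have hZint : Integrable Z μ := by
    refine ⟨hZ.aestronglyMeasurable, HasFiniteIntegral.of_bounded (C := 1) ?_⟩
    refine ae_of_all _ fun ω => ?_
    rw [Real.norm_eq_abs, abs_le]
    exact ⟨by linarith [(hr ω).1], (hr ω).2⟩
  have hm0 : 0 ≤ m := hm ▸ integral_nonneg fun ω => (hr ω).1
  have hm1 : m ≤ 1 := by
    rw [← hm]
    calc ∫ ω, Z ω ∂μ ≤ ∫ _, (1 : ℝ) ∂μ :=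
          integral_mono hZint (integrable_const 1) fun ω => (hr ω).2
      _ = 1 := by simp
  have hexpint : Integrable (fun ω => Real.exp (t * Z ω)) μ := by
    refine ⟨((hZ.const_mul t).exp).aestronglyMeasurable,
      HasFiniteIntegral.of_bounded (C := Real.exp |t|) ?_⟩
    refine ae_of_all _ fun ω => ?_
    rw [Real.norm_eq_abs, Real.abs_exp]
    apply Real.exp_le_exp.2
    calc t * Z ω ≤ |t * Z ω| := le_abs_self _
      _ = |t| * |Z ω| := abs_mul _ _
      _ ≤ |t| * 1 := by
          apply mul_le_mul_of_nonneg_left _ (abs_nonneg t)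
          rw [abs_le]; exact ⟨by linarith [(hr ω).1], (hr ω).2⟩
      _ = |t| := mul_one _
  have hpt : ∀ ω, Real.exp (t * Z ω) ≤ 1 - Z ω + Z ω * Real.exp t := by
    intro ω
    have hz0 := (hr ω).1
    have hz1 := (hr ω).2
    have hc := convexOn_exp.2 (Set.mem_univ (0 : ℝ)) (Set.mem_univ t)
      (by linarith : (0 : ℝ) ≤ 1 - Z ω) hz0 (by ring)
    simp only [smul_eq_mul, mul_zero, zero_add, Real.exp_zero, mul_one] at hc
    calc Real.exp (t * Z ω) = Real.exp (Z ω * t) := by rw [mul_comm]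
      _ ≤ (1 - Z ω) * 1 + Z ω * Real.exp t := by simpa using hc
      _ = 1 - Z ω + Z ω * Real.exp t := by ring
  have hRint : Integrable (fun ω => 1 - Z ω + Z ω * Real.exp t) μ :=
    ((integrable_const 1).sub hZint).add (hZint.mul_const _)
  have hmgf : mgf Z μ t ≤ 1 - m + m * Real.exp t := by
    rw [mgf]
    calc ∫ ω, Real.exp (t * Z ω) ∂μ ≤ ∫ ω, (1 - Z ω + Z ω * Real.exp t) ∂μ :=
          integral_mono hexpint hRint hpt
      _ = ∫ ω, (1 + Z ω * (Real.exp t - 1)) ∂μ := by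
          apply integral_congr_ae
          filter_upwards with ω
          ring
      _ = (∫ _, (1 : ℝ) ∂μ) + (∫ ω, Z ω ∂μ) * (Real.exp t - 1) := by
          rw [integral_add (integrable_const 1) (hZint.mul_const _), integral_mul_const]
      _ = 1 - m + m * Real.exp t := by rw [hm]; simp; ring
  exact hmgf.trans (rnm_bern_bound m t hm0 hm1)

/-- Tail bound for report-noisy-max with exponential noise: the probability that a suboptimal
action (with accumulated loss `G' = ∑ Y i` of mean `n(μ+Δ)`) beats the optimal action (with
accumulated loss `G = ∑ X i` of mean `nμ`) is at most `exp(-nΔ²/4) + exp(-εnΔ/2)`. -/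
theorem reportNoisyMax_exponential_tail {Ω : Type*} [MeasurableSpace Ω] (μ : Measure Ω)
    [IsProbabilityMeasure μ] (n : ℕ) (hn : 1 ≤ n) (ε Δ m : ℝ) (hε : 0 < ε) (hΔ : 0 < Δ)
    (X Y : Fin n → Ω → ℝ) (Q Q' : Ω → ℝ)
    (hX : ∀ i, Measurable (X i)) (hY : ∀ i, Measurable (Y i))
    (hQ : Measurable Q) (hQ' : Measurable Q')
    (hXrange : ∀ i ω, X i ω ∈ Set.Icc (0 : ℝ) 1)
    (hYrange : ∀ i ω, Y i ω ∈ Set.Icc (0 : ℝ) 1)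
    (hXid : ∀ i j, Measure.map (X i) μ = Measure.map (X j) μ)
    (hYid : ∀ i j, Measure.map (Y i) μ = Measure.map (Y j) μ)
    (hXmean : ∀ i, ∫ ω, X i ω ∂μ = m)
    (hYmean : ∀ i, ∫ ω, Y i ω ∂μ = m + Δ)
    (hQdist : Measure.map Q μ = expMeasure ε)
    (hQ'dist : Measure.map Q' μ = expMeasure ε)
    (hIndep : iIndepFun (Sum.elim (Sum.elim X Y) ![Q, Q']) μ) :
    μ {ω | -(∑ i, X i ω) + Q ω < -(∑ i, Y i ω) + Q' ω} ≤
      ENNReal.ofReal (Real.exp (-(n : ℝ) * Δ ^ 2 / 4) + Real.exp (-ε * n * Δ / 2)) := by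
  classical
  set c : ℝ := n * Δ / 2 with hc
  have hc0 : (0 : ℝ) ≤ c := by positivity
  -- the modified i.i.d. family: X's, -Y's, and (irrelevant) Q's
  set gmap : ((Fin n ⊕ Fin n) ⊕ Fin 2) → ℝ → ℝ :=
    Sum.elim (Sum.elim (fun _ => id) (fun _ => fun x => -x)) (fun _ => id) with hgmap
  have hgmeas : ∀ k, Measurable (gmap k) := by
    rintro ((i | i) | j)
    exacts [measurable_id, measurable_neg, measurable_id]
  set W : ((Fin n ⊕ Fin n) ⊕ Fin 2) → Ω → ℝ :=
    fun k => gmap k ∘ (Sum.elim (Sum.elim X Y) ![Q, Q']) k with hW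
  have hIndepW : iIndepFun W μ := hIndep.comp gmap hgmeas
  have hWmeas : ∀ k, Measurable (W k) := by
    rintro ((i | i) | j)
    · exact (hX i)
    · exact (hY i).neg
    · refine (hgmeas _).comp ?_
      fin_cases j
      · exact hQ
      · exact hQ'
  set s : Finset ((Fin n ⊕ Fin n) ⊕ Fin 2) :=
    Finset.univ.map ⟨Sum.inl, Sum.inl_injective⟩ with hs
  set T : Ω → ℝ := ∑ k ∈ s, W k with hT
  have hTeq : ∀ ω, T ω = (∑ i, X i ω) - (∑ i, Y i ω) := by
    intro ω
    rw [hT, Finset.sum_apply, hs, Finset.sum_map]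
    simp only [Function.Embedding.coeFn_mk, Fintype.sum_sum_type]
    have h1 : ∀ i : Fin n, W (Sum.inl (Sum.inl i)) ω = X i ω := fun i => rfl
    have h2 : ∀ i : Fin n, W (Sum.inl (Sum.inr i)) ω = -(Y i ω) := fun i => rfl
    simp only [h1, h2, Finset.sum_neg_distrib]
    ring
  have hTmeas : Measurable T := by
    rw [hT]
    have heq : (∑ k ∈ s, W k) = fun ω => ∑ k ∈ s, W k ω := by
      funext ω; simp [Finset.sum_apply]
    rw [heq]
    exact Finset.measurable_sum s fun k _ => hWmeas k
  -- mgf bounds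
  have hXmgf : ∀ i : Fin n, mgf (W (Sum.inl (Sum.inl i))) μ Δ
      ≤ Real.exp (Δ * m + Δ ^ 2 / 8) := by
    intro i
    have : W (Sum.inl (Sum.inl i)) = X i := rfl
    rw [this]
    exact rnm_mgf_le (hX i) (hXrange i) (hXmean i) Δ
  have hYmgf : ∀ i : Fin n, mgf (W (Sum.inl (Sum.inr i))) μ Δ
      ≤ Real.exp (-Δ * (m + Δ) + Δ ^ 2 / 8) := by
    intro i
    have h1 : W (Sum.inl (Sum.inr i)) = -(Y i) := rfl
    rw [h1, mgf_neg]
    have := rnm_mgf_le (hY i) (hYrange i) (hYmean i) (-Δ)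
    calc mgf (Y i) μ (-Δ) ≤ Real.exp (-Δ * (m + Δ) + (-Δ) ^ 2 / 8) := this
      _ = Real.exp (-Δ * (m + Δ) + Δ ^ 2 / 8) := by rw [neg_sq]
  have hint : Integrable (fun ω => Real.exp (Δ * T ω)) μ := by
    refine ⟨((hTmeas.const_mul Δ).exp).aestronglyMeasurable,
      HasFiniteIntegral.of_bounded (C := Real.exp (Δ * n)) ?_⟩
    refine ae_of_all _ fun ω => ?_
    rw [Real.norm_eq_abs, Real.abs_exp]
    apply Real.exp_le_exp.2
    apply mul_le_mul_of_nonneg_left _ hΔ.le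
    rw [hTeq ω]
    have h1 : (∑ i, X i ω) ≤ n := by
      calc (∑ i, X i ω) ≤ ∑ _i : Fin n, (1 : ℝ) :=
            Finset.sum_le_sum fun i _ => (hXrange i ω).2
        _ = n := by simp
    have h2 : (0 : ℝ) ≤ ∑ i, Y i ω := Finset.sum_nonneg fun i _ => (hYrange i ω).1
    linarith
  -- Chernoff bound
  have hch : (μ {ω | -c ≤ T ω}).toReal ≤ Real.exp (-(n : ℝ) * Δ ^ 2 / 4) := by
    have h0 := measure_ge_le_exp_mul_mgf (μ := μ) (X := T) (t := Δ) (-c) hΔ.le hint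
    refine h0.trans ?_
    have hmgfT : mgf T μ Δ = ∏ k ∈ s, mgf (W k) μ Δ := hIndepW.mgf_sum hWmeas s
    have hprod : ∏ k ∈ s, mgf (W k) μ Δ
        ≤ Real.exp (Δ * m + Δ ^ 2 / 8) ^ n * Real.exp (-Δ * (m + Δ) + Δ ^ 2 / 8) ^ n := by
      rw [hs, Finset.prod_map]
      simp only [Function.Embedding.coeFn_mk, Fintype.prod_sum_type]
      have hA : ∏ i : Fin n, mgf (W (Sum.inl (Sum.inl i))) μ Δ
          ≤ Real.exp (Δ * m + Δ ^ 2 / 8) ^ n := by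
        calc ∏ i : Fin n, mgf (W (Sum.inl (Sum.inl i))) μ Δ
            ≤ ∏ _i : Fin n, Real.exp (Δ * m + Δ ^ 2 / 8) :=
              Finset.prod_le_prod (fun i _ => mgf_nonneg) (fun i _ => hXmgf i)
          _ = Real.exp (Δ * m + Δ ^ 2 / 8) ^ n := by simp
      have hB : ∏ i : Fin n, mgf (W (Sum.inl (Sum.inr i))) μ Δ
          ≤ Real.exp (-Δ * (m + Δ) + Δ ^ 2 / 8) ^ n := by
        calc ∏ i : Fin n, mgf (W (Sum.inl (Sum.inr i))) μ Δ
            ≤ ∏ _i : Fin n, Real.exp (-Δ * (m + Δ) + Δ ^ 2 / 8) :=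
              Finset.prod_le_prod (fun i _ => mgf_nonneg) (fun i _ => hYmgf i)
          _ = Real.exp (-Δ * (m + Δ) + Δ ^ 2 / 8) ^ n := by simp
      exact mul_le_mul hA hB (Finset.prod_nonneg fun i _ => mgf_nonneg)
        (pow_nonneg (Real.exp_pos _).le n)
    calc Real.exp (-Δ * -c) * mgf T μ Δ
        ≤ Real.exp (-Δ * -c) *
          (Real.exp (Δ * m + Δ ^ 2 / 8) ^ n * Real.exp (-Δ * (m + Δ) + Δ ^ 2 / 8) ^ n) := by
          apply mul_le_mul_of_nonneg_left _ (Real.exp_pos _).le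
          rw [hmgfT]; exact hprod
      _ = Real.exp (-(n : ℝ) * Δ ^ 2 / 4) := by
          rw [← Real.exp_nat_mul, ← Real.exp_nat_mul, ← Real.exp_add, ← Real.exp_add]
          congr 1
          rw [hc]
          ring
  have hchern : μ {ω | -c ≤ T ω} ≤ ENNReal.ofReal (Real.exp (-(n : ℝ) * Δ ^ 2 / 4)) := by
    rw [← ENNReal.ofReal_toReal (measure_ne_top μ {ω | -c ≤ T ω})]
    exact ENNReal.ofReal_le_ofReal hch
  -- tail of Q'
  haveI : IsProbabilityMeasure (expMeasure ε) := isProbabilityMeasure_expMeasure hε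
  have hQ'tail : μ {ω | c < Q' ω} = ENNReal.ofReal (Real.exp (-(ε * c))) := by
    have hpre : {ω | c < Q' ω} = Q' ⁻¹' Set.Ioi c := rfl
    rw [hpre, ← Measure.map_apply hQ' measurableSet_Ioi, hQ'dist]
    have hIic : expMeasure ε (Set.Iic c) = ENNReal.ofReal (1 - Real.exp (-(ε * c))) := by
      show gammaMeasure 1 ε (Set.Iic c) = _
      rw [gammaMeasure, withDensity_apply _ measurableSet_Iic]
      have h2 : ∫⁻ y in Set.Iic c, exponentialPDF ε y
          = ENNReal.ofReal (if 0 ≤ c then 1 - Real.exp (-(ε * c)) else 0) :=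
        lintegral_exponentialPDF_eq_antiDeriv hε c
      rw [if_pos hc0] at h2
      exact h2
    have hcompl : Set.Ioi c = (Set.Iic c)ᶜ := Set.compl_Iic.symm
    rw [hcompl, measure_compl measurableSet_Iic (measure_ne_top _ _), measure_univ, hIic]
    have he1 : Real.exp (-(ε * c)) ≤ 1 := by
      rw [Real.exp_le_one_iff]
      have : 0 ≤ ε * c := mul_nonneg hε.le hc0
      linarith
    rw [← ENNReal.ofReal_one, ← ENNReal.ofReal_sub _ (by linarith [Real.exp_pos (-(ε * c))])]
    congr 1
    ring
  have hQnull : μ {ω | Q ω < 0} = 0 := by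
    have hpre : {ω | Q ω < 0} = Q ⁻¹' Set.Iio 0 := rfl
    rw [hpre, ← Measure.map_apply hQ measurableSet_Iio, hQdist]
    show gammaMeasure 1 ε (Set.Iio 0) = 0
    rw [gammaMeasure, withDensity_apply _ measurableSet_Iio]
    exact lintegral_exponentialPDF_of_nonpos le_rfl
  -- inclusion of the bad event
  have hsub : {ω | -(∑ i, X i ω) + Q ω < -(∑ i, Y i ω) + Q' ω}
      ⊆ {ω | -c ≤ T ω} ∪ ({ω | c < Q' ω} ∪ {ω | Q ω < 0}) := by
    intro ω hω
    simp only [Set.mem_setOf_eq] at hω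
    simp only [Set.mem_union, Set.mem_setOf_eq]
    by_contra hcon
    push_neg at hcon
    obtain ⟨h1, h2, h3⟩ := hcon
    have hTω := hTeq ω
    linarith
  calc μ {ω | -(∑ i, X i ω) + Q ω < -(∑ i, Y i ω) + Q' ω}
      ≤ μ ({ω | -c ≤ T ω} ∪ ({ω | c < Q' ω} ∪ {ω | Q ω < 0})) := measure_mono hsub
    _ ≤ μ {ω | -c ≤ T ω} + μ ({ω | c < Q' ω} ∪ {ω | Q ω < 0}) := measure_union_le _ _
    _ ≤ μ {ω | -c ≤ T ω} + (μ {ω | c < Q' ω} + μ {ω | Q ω < 0}) :=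
        add_le_add le_rfl (measure_union_le _ _)
    _ = μ {ω | -c ≤ T ω} + μ {ω | c < Q' ω} := by rw [hQnull, add_zero]
    _ ≤ ENNReal.ofReal (Real.exp (-(n : ℝ) * Δ ^ 2 / 4))
        + ENNReal.ofReal (Real.exp (-(ε * c))) := add_le_add hchern (le_of_eq hQ'tail)
    _ = ENNReal.ofReal (Real.exp (-(n : ℝ) * Δ ^ 2 / 4) + Real.exp (-ε * n * Δ / 2)) := by
        rw [← ENNReal.ofReal_add (Real.exp_pos _).le (Real.exp_pos _).le]
        congr 2
        rw [hc]
        ring
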